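/- Let V be a finite-dimensional real inner product space, let x ∈ V with ‖x‖ = 1, and let U be a compact subset of the unit sphere of V with U = −U which is a neighbourhood of x within the unit sphere. Let (g_n) be a sequence in GL(V) such that sup_{u ∈ U} dist(g_n u / ‖g_n u‖, {x, −x}) → 0 as n → ∞. Then for every h ∈ End(V) which is the limit of g_{n_k}/‖g_{n_k}‖ along some subsequence (where ‖·‖ is the operator norm on End(V)), the map h has rank one, its range is the line ℝ·x, and h(u) ≠ 0 for every u in the interior of U relative to the unit sphere. (Fact 4.8, stated with the projective convergence hypothesis and the accumulation points in P(End(V)) expressed via normalized vectors and normalized operators.) -/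

import Mathlib

open Filter RealInnerProductSpace

section Helpers
variable {V : Type*} [NormedAddCommGroup V] [InnerProductSpace ℝ V]

lemma inner_ge_half (x w : V) (hx : ‖x‖ = 1) (hw : ‖w‖ = 1)
    (hd : Metric.infDist w ({x, -x} : Set V) ≤ 1) :
    (1:ℝ)/2 ≤ |(⟪w, x⟫)| := by
  have hcpt : IsCompact ({x, -x} : Set V) := (Set.toFinite _).isCompact
  obtain ⟨y, hy, hdy⟩ := hcpt.exists_infDist_eq_dist ⟨x, by simp⟩ w
  have h1 : ‖w - y‖ ≤ 1 := by rw [← dist_eq_norm, ← hdy]; exact hd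
  rcases hy with rfl | hy
  · have h2 : ‖w - y‖^2 = ‖w‖^2 - 2*⟪w,y⟫ + ‖y‖^2 := norm_sub_sq_real w y
    have : (1:ℝ)/2 ≤ ⟪w, y⟫ := by nlinarith [norm_nonneg (w-y)]
    exact this.trans (le_abs_self _)
  · simp only [Set.mem_singleton_iff] at hy
    subst hy
    have hny : ‖(-x : V)‖ = 1 := by simpa using hx
    have h2 : ‖w - (-x)‖^2 = ‖w‖^2 - 2*⟪w,-x⟫ + ‖(-x:V)‖^2 := norm_sub_sq_real w (-x)
    have h3 : (1:ℝ)/2 ≤ ⟪w, -x⟫ := by nlinarith [norm_nonneg (w - (-x))]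
    rw [inner_neg_right] at h3
    calc (1:ℝ)/2 ≤ -⟪w,x⟫ := h3
    _ ≤ |(⟪w,x⟫)| := neg_le_abs _

omit [InnerProductSpace ℝ V] in
lemma neg_mem_nhdsWithin_sphere [NormedSpace ℝ V] (U : Set V) (hUsym : U = -U) (u : V)
    (hnhd : U ∈ nhdsWithin u (Metric.sphere (0:V) 1)) :
    U ∈ nhdsWithin (-u) (Metric.sphere (0:V) 1) := by
  obtain ⟨O, hO, huO, hsub⟩ := mem_nhdsWithin.1 hnhd
  refine mem_nhdsWithin.2 ⟨-O, hO.neg, by simpa using huO, ?_⟩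
  rintro w ⟨hw1, hw2⟩
  have hw2' : -w ∈ Metric.sphere (0:V) 1 := by
    rw [mem_sphere_zero_iff_norm] at hw2 ⊢; simpa using hw2
  have : -w ∈ U := hsub ⟨hw1, hw2'⟩
  rw [hUsym]; simpa using this

omit [InnerProductSpace ℝ V] in
lemma cap_lemma [NormedSpace ℝ V] (U : Set V) (e v : V)
    (he : ‖e‖ = 1) (hv : ‖v‖ = 1)
    (hnhd : U ∈ nhdsWithin e (Metric.sphere (0:V) 1)) :
    ∃ δ > (0:ℝ), δ ≤ 1/4 ∧ ∀ s ∈ Set.Icc (0:ℝ) δ,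
      (0 < ‖(1-s) • e + s • v‖ ∧
        ‖(1-s) • e + s • v‖⁻¹ • ((1-s) • e + s • v) ∈ U) := by
  obtain ⟨O, hO, heO, hsub⟩ := mem_nhdsWithin.1 hnhd
  set p : ℝ → V := fun s => (1-s) • e + s • v with hp
  have hpc : Continuous p := by fun_prop
  have hp0 : p 0 = e := by simp [hp]
  have hnorm_lb : ∀ s ∈ Set.Icc (0:ℝ) (1/4 : ℝ), (1:ℝ)/2 ≤ ‖p s‖ := by
    rintro s ⟨hs0, hs4⟩
    have h1 : ‖(1-s) • e‖ = 1 - s := by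
      rw [norm_smul, he]; simp [abs_of_nonneg (by linarith : (0:ℝ) ≤ 1 - s)]
    have h2 : ‖s • v‖ = s := by rw [norm_smul, hv]; simp [abs_of_nonneg hs0]
    have h3 : ‖(1-s) • e‖ ≤ ‖p s‖ + ‖s • v‖ := by
      calc ‖(1-s) • e‖ = ‖p s - s • v‖ := by simp [hp]
      _ ≤ ‖p s‖ + ‖s • v‖ := norm_sub_le _ _
    linarith
  -- continuity of normalized map at 0
  have hF : ContinuousAt (fun s => ‖p s‖⁻¹ • p s) 0 := by
    have h1 : ContinuousAt (fun s => ‖p s‖⁻¹) 0 := by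
      apply ContinuousAt.inv₀ (hpc.norm.continuousAt)
      rw [hp0, he]; norm_num
    exact h1.smul hpc.continuousAt
  have hF0 : ‖p 0‖⁻¹ • p 0 = e := by rw [hp0, he]; simp
  have hmem : (fun s => ‖p s‖⁻¹ • p s) ⁻¹' O ∈ nhds (0:ℝ) :=
    hF.preimage_mem_nhds (by show O ∈ nhds (‖p 0‖⁻¹ • p 0); rw [hF0]; exact hO.mem_nhds heO)
  obtain ⟨ε, hε, hball⟩ := Metric.mem_nhds_iff.1 hmem
  refine ⟨min (ε/2) (1/4), by positivity, min_le_right _ _, ?_⟩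
  rintro s ⟨hs0, hsδ⟩
  have hs4 : s ≤ 1/4 := hsδ.trans (min_le_right _ _)
  have hsε : s < ε := by
    have := hsδ.trans (min_le_left _ _); linarith
  have hpos : 0 < ‖p s‖ := lt_of_lt_of_le (by norm_num) (hnorm_lb s ⟨hs0, hs4⟩)
  refine ⟨hpos, ?_⟩
  have hinO : ‖p s‖⁻¹ • p s ∈ O := hball (by simp [abs_of_nonneg hs0, hsε])
  have hsphere : ‖p s‖⁻¹ • p s ∈ Metric.sphere (0:V) 1 := by
    rw [mem_sphere_zero_iff_norm, norm_smul, norm_inv, norm_norm]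
    field_simp
  exact hsub ⟨hinO, hsphere⟩
end Helpers

set_option maxHeartbeats 1000000 in
/-- Fact 4.8: if a sequence `(gₙ)` in `GL(V)` sends a symmetric compact neighbourhood `U`
of `x` in the unit sphere, projectively, uniformly towards `±x`, then every accumulation
point `h` of the normalized sequence `gₙ/‖gₙ‖` in `End(V)` is a rank-one operator with
range `ℝ·x`, not vanishing on the relative interior of `U`. -/
theorem fact_4_8 {V : Type*} [NormedAddCommGroup V] [InnerProductSpace ℝ V]
    [FiniteDimensional ℝ V]
    (x : V) (hx : ‖x‖ = 1) (U : Set V)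
    (hUc : IsCompact U) (hUs : U ⊆ Metric.sphere (0 : V) 1) (hUsym : U = -U)
    (hUnhd : U ∈ nhdsWithin x (Metric.sphere (0 : V) 1))
    (g : ℕ → (V ≃L[ℝ] V))
    (hconv : ∀ ε > (0 : ℝ), ∃ N : ℕ, ∀ n ≥ N, ∀ u ∈ U,
      Metric.infDist (‖(g n) u‖⁻¹ • (g n) u) ({x, -x} : Set V) ≤ ε)
    (h : V →L[ℝ] V) (φ : ℕ → ℕ) (hφ : StrictMono φ)
    (hlim : Tendsto
      (fun m : ℕ => ‖(g (φ m) : V →L[ℝ] V)‖⁻¹ • (g (φ m) : V →L[ℝ] V))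
      atTop (nhds h)) :
    Module.finrank ℝ (LinearMap.range (h : V →ₗ[ℝ] V)) = 1 ∧
    LinearMap.range (h : V →ₗ[ℝ] V) = Submodule.span ℝ {x} ∧
    ∀ u ∈ Metric.sphere (0 : V) 1,
      U ∈ nhdsWithin u (Metric.sphere (0 : V) 1) → h u ≠ 0 := by
  classical
  have hx0 : x ≠ 0 := by intro h0; rw [h0] at hx; simp at hx
  -- positivity of norms
  have hgw : ∀ (n : ℕ) (w : V), w ≠ 0 → 0 < ‖(g n) w‖ := by
    intro n w hw
    rw [norm_pos_iff]
    simpa using ((g n).map_eq_zero_iff).not.2 hw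
  have hgnorm : ∀ n, (0:ℝ) < ‖(g n : V →L[ℝ] V)‖ := by
    intro n
    have h1 := hgw n x hx0
    have h2 := (g n : V →L[ℝ] V).le_opNorm x
    rw [hx, mul_one] at h2
    exact lt_of_lt_of_le h1 h2
  -- evaluation convergence
  have heval : ∀ w : V, Tendsto (fun m => ‖(g (φ m) : V →L[ℝ] V)‖⁻¹ • (g (φ m)) w)
      atTop (nhds (h w)) := by
    intro w
    have := ((ContinuousLinearMap.apply ℝ V w).continuous.tendsto h).comp hlim
    simpa [Function.comp_def] using this
  -- ratio convergence
  have hratio : ∀ w : V, Tendsto (fun m => ‖(g (φ m) : V →L[ℝ] V)‖⁻¹ * ‖(g (φ m)) w‖)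
      atTop (nhds ‖h w‖) := by
    intro w
    have := (continuous_norm.tendsto (h w)).comp (heval w)
    have he : ∀ m : ℕ, ‖(‖(g (φ m) : V →L[ℝ] V)‖⁻¹ • (g (φ m)) w)‖
        = ‖(g (φ m) : V →L[ℝ] V)‖⁻¹ * ‖(g (φ m)) w‖ := by
      intro m
      rw [norm_smul, norm_inv, norm_norm]
    exact this.congr (fun m => he m)
  -- norm of h is 1
  have hnorm : ‖h‖ = 1 := by
    have h1 : Tendsto (fun m => ‖(‖(g (φ m) : V →L[ℝ] V)‖⁻¹ • (g (φ m) : V →L[ℝ] V))‖)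
        atTop (nhds ‖h‖) := hlim.norm
    have h2 : ∀ m : ℕ, ‖(‖(g (φ m) : V →L[ℝ] V)‖⁻¹ • (g (φ m) : V →L[ℝ] V))‖ = 1 := by
      intro m
      have h3 := norm_smul (‖(g (φ m) : V →L[ℝ] V)‖⁻¹) (g (φ m) : V →L[ℝ] V)
      rw [h3, norm_inv, norm_norm]
      exact inv_mul_cancel₀ (hgnorm (φ m)).ne'
    rw [funext h2] at h1
    exact (tendsto_nhds_unique tendsto_const_nhds h1).symm
  have hne : h ≠ 0 := by
    intro h0; rw [h0] at hnorm; simp at hnorm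
  -- sphere membership of x, and x ∈ U
  have hxsph : x ∈ Metric.sphere (0:V) 1 := by rwa [mem_sphere_zero_iff_norm]
  have hxU : x ∈ U := mem_of_mem_nhdsWithin hxsph hUnhd
  -- span of U is everything
  have hspanU : Submodule.span ℝ U = ⊤ := by
    rw [Submodule.eq_top_iff']
    intro v
    by_cases hv : v = 0
    · simp [hv]
    have hvn : (0:ℝ) < ‖v‖ := norm_pos_iff.2 hv
    obtain ⟨O, hO, hxO, hsub⟩ := mem_nhdsWithin.1 hUnhd
    set p : ℝ → V := fun t => x + t • v with hp
    have hpc : Continuous p := by fun_prop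
    have hF : ContinuousAt (fun t => ‖p t‖⁻¹ • p t) 0 := by
      have h1 : ContinuousAt (fun t => ‖p t‖⁻¹) 0 :=
        ContinuousAt.inv₀ hpc.norm.continuousAt (by simp [hp, hx])
      exact h1.smul hpc.continuousAt
    have hmem : (fun t => ‖p t‖⁻¹ • p t) ⁻¹' O ∈ nhds (0:ℝ) := by
      refine hF.preimage_mem_nhds ?_
      show O ∈ nhds (‖p 0‖⁻¹ • p 0)
      have he : ‖p 0‖⁻¹ • p 0 = x := by simp [hp, hx]
      rw [he]
      exact hO.mem_nhds hxO
    obtain ⟨ε, hε, hball⟩ := Metric.mem_nhds_iff.1 hmem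
    set t : ℝ := min (ε/2) (1/(2*‖v‖)) with ht
    have ht0 : 0 < t := lt_min (by linarith) (by positivity)
    have htv : ‖t • v‖ ≤ 1/2 := by
      rw [norm_smul, Real.norm_eq_abs, abs_of_pos ht0]
      have h1 : t ≤ 1/(2*‖v‖) := min_le_right _ _
      calc t * ‖v‖ ≤ (1/(2*‖v‖)) * ‖v‖ := by nlinarith
      _ = 1/2 := by field_simp
    have hptn : (0:ℝ) < ‖p t‖ := by
      have h1 : ‖x‖ ≤ ‖p t‖ + ‖t • v‖ := by
        calc ‖x‖ = ‖p t - t • v‖ := by simp [hp]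
        _ ≤ ‖p t‖ + ‖t • v‖ := norm_sub_le _ _
      rw [hx] at h1; linarith
    have hinO : ‖p t‖⁻¹ • p t ∈ O := by
      apply hball
      simp only [Metric.mem_ball, Real.dist_eq, sub_zero, Set.mem_preimage] at *
      rw [abs_of_pos ht0]
      have := min_le_left (ε/2) (1/(2*‖v‖))
      linarith
    have hsph : ‖p t‖⁻¹ • p t ∈ Metric.sphere (0:V) 1 := by
      rw [mem_sphere_zero_iff_norm, norm_smul, norm_inv, norm_norm]
      field_simp
    have hptU : ‖p t‖⁻¹ • p t ∈ U := hsub ⟨hinO, hsph⟩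
    have hptspan : p t ∈ Submodule.span ℝ U := by
      have h1 : ‖p t‖ • (‖p t‖⁻¹ • p t) = p t := smul_inv_smul₀ hptn.ne' _
      rw [← h1]
      exact Submodule.smul_mem _ _ (Submodule.subset_span hptU)
    have hxspan : x ∈ Submodule.span ℝ U := Submodule.subset_span hxU
    have htv_span : t • v ∈ Submodule.span ℝ U := by
      have : t • v = p t - x := by simp [hp]
      rw [this]; exact Submodule.sub_mem _ hptspan hxspan
    have : v = t⁻¹ • (t • v) := (inv_smul_smul₀ ht0.ne' v).symm
    rw [this]
    exact Submodule.smul_mem _ _ htv_span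
  -- h maps U into the line through x
  have hUmem : ∀ u ∈ U, h u ∈ Submodule.span ℝ ({x} : Set V) := by
    intro u hu
    by_cases h0 : h u = 0
    · simp [h0]
    have hu0 : u ≠ 0 := by
      have h1 := hUs hu
      rw [mem_sphere_zero_iff_norm] at h1
      intro hz; rw [hz] at h1; simp at h1
    have hnu : ‖h u‖ ≠ 0 := norm_ne_zero_iff.2 h0
    have hvlim : Tendsto (fun m => ‖(g (φ m)) u‖⁻¹ • (g (φ m)) u) atTop
        (nhds (‖h u‖⁻¹ • h u)) := by
      have h1 := ((hratio u).inv₀ hnu).smul (heval u)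
      refine h1.congr (fun m => ?_)
      rw [smul_smul]
      congr 1
      have hg := (hgnorm (φ m)).ne'
      have hgu := (hgw (φ m) u hu0).ne'
      field_simp
    have hinf0 : Tendsto (fun m => Metric.infDist (‖(g (φ m)) u‖⁻¹ • (g (φ m)) u)
        ({x,-x} : Set V)) atTop (nhds 0) := by
      have hall : Tendsto (fun n => Metric.infDist (‖(g n) u‖⁻¹ • (g n) u)
          ({x,-x} : Set V)) atTop (nhds 0) := by
        rw [Metric.tendsto_atTop]
        intro ε hε
        obtain ⟨N, hN⟩ := hconv (ε/2) (by linarith)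
        refine ⟨N, fun n hn => ?_⟩
        have h1 := hN n hn u hu
        have h2 : (0:ℝ) ≤ Metric.infDist (‖(g n) u‖⁻¹ • (g n) u) ({x,-x} : Set V) :=
          Metric.infDist_nonneg
        rw [Real.dist_eq, sub_zero, abs_of_nonneg h2]
        linarith
      exact hall.comp hφ.tendsto_atTop
    have hcont : Tendsto (fun m => Metric.infDist (‖(g (φ m)) u‖⁻¹ • (g (φ m)) u)
        ({x,-x} : Set V)) atTop
        (nhds (Metric.infDist (‖h u‖⁻¹ • h u) ({x,-x} : Set V))) :=
      ((Metric.continuous_infDist_pt _).tendsto _).comp hvlim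
    have heq0 : Metric.infDist (‖h u‖⁻¹ • h u) ({x,-x} : Set V) = 0 :=
      tendsto_nhds_unique hcont hinf0
    have hmem2 : ‖h u‖⁻¹ • h u ∈ ({x,-x} : Set V) := by
      have hclosed : IsClosed ({x,-x} : Set V) := (Set.toFinite _).isClosed
      have hne' : ({x,-x} : Set V).Nonempty := ⟨x, by simp⟩
      rwa [← IsClosed.mem_iff_infDist_zero hclosed hne'] at heq0
    rw [Submodule.mem_span_singleton]
    rcases hmem2 with h1 | h1
    · exact ⟨‖h u‖, by rw [← h1, smul_inv_smul₀ hnu]⟩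
    · simp only [Set.mem_singleton_iff] at h1
      exact ⟨-‖h u‖, by rw [neg_smul, ← smul_neg, ← h1, smul_inv_smul₀ hnu]⟩
  -- range identification
  have hrle : LinearMap.range (h : V →ₗ[ℝ] V) ≤ Submodule.span ℝ ({x} : Set V) := by
    rw [LinearMap.range_eq_map, ← hspanU, Submodule.map_span, Submodule.span_le]
    rintro y ⟨w, hw, rfl⟩
    simpa using hUmem w hw
  have hrne : LinearMap.range (h : V →ₗ[ℝ] V) ≠ ⊥ := by
    intro h0
    rw [LinearMap.range_eq_bot] at h0
    apply hne
    ext z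
    have := LinearMap.congr_fun h0 z
    simpa using this
  have hfr : Module.finrank ℝ (LinearMap.range (h : V →ₗ[ℝ] V)) = 1 := by
    have hle : Module.finrank ℝ (LinearMap.range (h : V →ₗ[ℝ] V)) ≤ 1 := by
      have := Submodule.finrank_mono hrle
      rwa [finrank_span_singleton hx0] at this
    have hge : 1 ≤ Module.finrank ℝ (LinearMap.range (h : V →ₗ[ℝ] V)) := by
      rw [Nat.one_le_iff_ne_zero]
      intro h0
      exact hrne (Submodule.finrank_eq_zero.1 h0)
    omega
  have hrange : LinearMap.range (h : V →ₗ[ℝ] V) = Submodule.span ℝ ({x} : Set V) :=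
    Submodule.eq_of_le_of_finrank_eq hrle
      (by rw [hfr, finrank_span_singleton hx0])
  refine ⟨hfr, hrange, ?_⟩
  -- nonvanishing on the relative interior
  -- key inequality from hconv with ε = 1
  obtain ⟨N, hN⟩ := hconv 1 one_pos
  have key : ∀ n, N ≤ n → ∀ w ∈ U, ‖(g n) w‖ / 2 ≤ |(⟪(g n) w, x⟫ : ℝ)| := by
    intro n hn w hw
    have hw0 : w ≠ 0 := by
      have h1 := hUs hw; rw [mem_sphere_zero_iff_norm] at h1
      intro hz; rw [hz] at h1; simp at h1
    have hgwpos := hgw n w hw0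
    have hunit : ‖‖(g n) w‖⁻¹ • (g n) w‖ = 1 := by
      rw [norm_smul, norm_inv, norm_norm]; field_simp
    have h2 := inner_ge_half x _ hx hunit (hN n hn w hw)
    rw [real_inner_smul_left, abs_mul, abs_of_nonneg (inv_nonneg.2 (norm_nonneg ((g n) w)))] at h2
    calc ‖(g n) w‖ / 2 = ‖(g n) w‖ * (1/2) := by ring
    _ ≤ ‖(g n) w‖ * (‖(g n) w‖⁻¹ * |(⟪(g n) w, x⟫ : ℝ)|) :=
        mul_le_mul_of_nonneg_left h2 (norm_nonneg _)
    _ = |(⟪(g n) w, x⟫ : ℝ)| := by field_simp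
  intro u husph hunhd hu0
  have huU : u ∈ U := mem_of_mem_nhdsWithin husph hunhd
  have hun : ‖u‖ = 1 := by rwa [mem_sphere_zero_iff_norm] at husph
  have hu0' : u ≠ 0 := by intro hz; rw [hz] at hun; simp at hun
  -- pick v in U with h v ≠ 0
  have hvex : ∃ v ∈ U, h v ≠ 0 := by
    by_contra hc
    push_neg at hc
    apply hne
    have hker : (⊤ : Submodule ℝ V) ≤ LinearMap.ker (h : V →ₗ[ℝ] V) := by
      rw [← hspanU]
      refine Submodule.span_le.2 (fun w hw => ?_)
      simp only [SetLike.mem_coe, LinearMap.mem_ker, ContinuousLinearMap.coe_coe]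
      exact hc w hw
    ext z
    have hz := hker (Submodule.mem_top (x := z))
    simpa using hz
  obtain ⟨v, hvU, hv0⟩ := hvex
  have hvn : ‖v‖ = 1 := by have := hUs hvU; rwa [mem_sphere_zero_iff_norm] at this
  have hv0' : v ≠ 0 := by intro hz; rw [hz] at hvn; simp at hvn
  -- caps at u and -u
  obtain ⟨δ₁, hδ₁, hδ₁4, hcap₁⟩ := cap_lemma U u v hun hvn hunhd
  have hnun : ‖(-u : V)‖ = 1 := by simpa using hun
  obtain ⟨δ₂, hδ₂, hδ₂4, hcap₂⟩ :=
    cap_lemma U (-u) v hnun hvn (neg_mem_nhdsWithin_sphere U hUsym u hunhd)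
  set t₀ := min δ₁ δ₂ with ht₀
  have ht₀0 : 0 < t₀ := lt_min hδ₁ hδ₂
  have ht₀4 : t₀ ≤ 1/4 := (min_le_left _ _).trans hδ₁4
  -- choose a good index m
  have hhv : 0 < ‖h v‖ := norm_pos_iff.2 hv0
  have he1 : ∀ᶠ m in atTop,
      ‖(g (φ m) : V →L[ℝ] V)‖⁻¹ * ‖(g (φ m)) u‖ < t₀ * ‖h v‖ / 8 := by
    have h1 := hratio u
    rw [hu0, norm_zero] at h1
    exact h1.eventually_lt_const (by positivity)
  have he2 : ∀ᶠ m in atTop,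
      ‖h v‖/2 < ‖(g (φ m) : V →L[ℝ] V)‖⁻¹ * ‖(g (φ m)) v‖ :=
    (hratio v).eventually_const_lt (by linarith)
  have he3 : ∀ᶠ m in atTop, N ≤ φ m := hφ.tendsto_atTop.eventually_ge_atTop N
  obtain ⟨m, hm1, hm2, hm3⟩ := (he1.and (he2.and he3)).exists
  set n := φ m with hn
  set A := (⟪(g n) u, x⟫ : ℝ) with hA
  set B := (⟪(g n) v, x⟫ : ℝ) with hB
  have hgupos := hgw n u hu0'
  have hgvpos := hgw n v hv0'
  have hAk : ‖(g n) u‖ / 2 ≤ |A| := key n hm3 u huU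
  have hBk : ‖(g n) v‖ / 2 ≤ |B| := key n hm3 v hvU
  have hA0 : A ≠ 0 := by
    intro hz; rw [hz, abs_zero] at hAk; linarith
  have hB0 : B ≠ 0 := by
    intro hz; rw [hz, abs_zero] at hBk; linarith
  have hAub : |A| ≤ ‖(g n) u‖ := by
    calc |A| ≤ ‖(g n) u‖ * ‖x‖ := abs_real_inner_le_norm _ _
    _ = ‖(g n) u‖ := by rw [hx, mul_one]
  have hgn := hgnorm n
  have hcmp : ‖(g n) u‖ < t₀/4 * ‖(g n) v‖ := by
    have h1 : ‖(g n) u‖ < (t₀ * ‖h v‖ / 8) * ‖(g n : V →L[ℝ] V)‖ := by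
      have := (mul_lt_mul_of_pos_right hm1 hgn)
      rwa [mul_comm (‖(g n : V →L[ℝ] V)‖⁻¹) _, mul_assoc,
        inv_mul_cancel₀ hgn.ne', mul_one] at this
    have h2 : (‖h v‖/2) * ‖(g n : V →L[ℝ] V)‖ < ‖(g n) v‖ := by
      have := (mul_lt_mul_of_pos_right hm2 hgn)
      rwa [mul_comm (‖(g n : V →L[ℝ] V)‖⁻¹) _, mul_assoc,
        inv_mul_cancel₀ hgn.ne', mul_one] at this
    have h3 : t₀/4 * ((‖h v‖/2) * ‖(g n : V →L[ℝ] V)‖) < t₀/4 * ‖(g n) v‖ :=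
      mul_lt_mul_of_pos_left h2 (by positivity)
    have h4 : t₀/4 * ((‖h v‖/2) * ‖(g n : V →L[ℝ] V)‖)
        = (t₀ * ‖h v‖/8) * ‖(g n : V →L[ℝ] V)‖ := by ring
    linarith
  have hABlt : |A| < t₀ * |B| / 2 := by
    have h5 : ‖(g n) v‖ ≤ 2 * |B| := by linarith
    have h6 : t₀/4 * ‖(g n) v‖ ≤ t₀/4 * (2*|B|) :=
      mul_le_mul_of_nonneg_left h5 (by positivity)
    have h7 : t₀/4 * (2*|B|) = t₀ * |B| / 2 := by ring
    linarith
  -- sign choice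
  set σ : ℝ := if 0 < A * B then -1 else 1 with hσ
  have hσ2 : σ = 1 ∨ σ = -1 := by
    by_cases hc : 0 < A * B <;> simp [hσ, hc]
  have hσAB : σ * (A * B) < 0 := by
    by_cases hc : 0 < A * B
    · simp only [hσ, if_pos hc]; linarith
    · have hne0 : A * B ≠ 0 := mul_ne_zero hA0 hB0
      have hlt : A * B < 0 := lt_of_le_of_ne (not_lt.1 hc) hne0
      simp only [hσ, if_neg hc]; linarith
  have hprod : σ * (A * B) = -(|A| * |B|) := by
    rcases hσ2 with h1 | h1
    · rw [h1, one_mul] at hσAB ⊢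
      rw [← abs_mul, abs_of_neg hσAB]; ring
    · rw [h1] at hσAB ⊢
      have hpos : 0 < A * B := by nlinarith
      rw [← abs_mul, abs_of_pos hpos]; ring
  set e := σ • u with he
  have hen : ‖e‖ = 1 := by
    rcases hσ2 with h1 | h1 <;> simp [he, h1, hun, norm_smul]
  -- cap for e
  have hcap : ∀ s ∈ Set.Icc (0:ℝ) t₀,
      0 < ‖(1-s) • e + s • v‖ ∧
      ‖(1-s) • e + s • v‖⁻¹ • ((1-s) • e + s • v) ∈ U := by
    rintro s ⟨hs0, hs1⟩
    rcases hσ2 with h1 | h1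
    · have := hcap₁ s ⟨hs0, hs1.trans (min_le_left _ _)⟩
      simpa [he, h1] using this
    · have := hcap₂ s ⟨hs0, hs1.trans (min_le_right _ _)⟩
      simpa [he, h1] using this
  -- the sign-changing function
  set f : ℝ → ℝ := fun s => (⟪(g n) ((1-s) • e + s • v), x⟫ : ℝ) with hf
  have hfc : Continuous f := by
    apply Continuous.inner
    · exact (g n).continuous.comp (by fun_prop)
    · exact continuous_const
  have hfs : ∀ s, f s = (1-s) * (σ * A) + s * B := by
    intro s
    simp only [hf, map_add, map_smul, he]
    rw [inner_add_left, real_inner_smul_left, real_inner_smul_left, real_inner_smul_left]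
  have hsign : f 0 * f t₀ < 0 := by
    rw [hfs 0, hfs t₀]
    have hexp : ((1-(0:ℝ)) * (σ * A) + 0 * B) * ((1-t₀) * (σ * A) + t₀ * B)
        = (1-t₀) * (σ * σ) * A^2 + t₀ * (σ * (A * B)) := by ring
    have hσsq : σ * σ = 1 := by rcases hσ2 with h1 | h1 <;> rw [h1] <;> norm_num
    rw [hexp, hσsq, hprod]
    nlinarith [sq_abs A, abs_pos.2 hA0, abs_pos.2 hB0]
  have h0mem : (0:ℝ) ∈ Set.uIcc (f 0) (f t₀) := by
    rcases mul_neg_iff.1 hsign with ⟨hp, hq⟩ | ⟨hp, hq⟩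
    · exact Set.mem_uIcc.2 (Or.inr ⟨hq.le, hp.le⟩)
    · exact Set.mem_uIcc.2 (Or.inl ⟨hp.le, hq.le⟩)
  obtain ⟨s, hsmem, hfs0⟩ := intermediate_value_uIcc hfc.continuousOn h0mem
  rw [Set.uIcc_of_le ht₀0.le] at hsmem
  obtain ⟨hppos, hwU⟩ := hcap s hsmem
  set w := ‖(1-s) • e + s • v‖⁻¹ • ((1-s) • e + s • v) with hw
  have hinner : (⟪(g n) w, x⟫ : ℝ) = 0 := by
    have hgs : (g n) w = ‖(1-s) • e + s • v‖⁻¹ • (g n) ((1-s) • e + s • v) := by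
      rw [hw, map_smul]
    rw [hgs, real_inner_smul_left]
    have : (⟪(g n) ((1-s) • e + s • v), x⟫ : ℝ) = f s := rfl
    rw [this, hfs0, mul_zero]
  have hk := key n hm3 w hwU
  rw [hinner, abs_zero] at hk
  have hw0 : w ≠ 0 := by
    have h1 := hUs hwU
    rw [mem_sphere_zero_iff_norm] at h1
    intro hz; rw [hz] at h1; simp at h1
  have := hgw n w hw0
  linarith
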